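/- arXiv:1311.4822 — 2 statements merged into one kernel-verified Lean document; each statement's English description precedes it below -/
import Mathlib

section
/- The alternative net reproductive number equals the norm of the partial next-generation newborn submatrix: R̂₀ = ‖W̄‖, where ‖W̄‖ is the maximum absolute column sum of W̄. -/
open Matrix BigOperators

/-- Spectral radius of a real square matrix: the maximum modulus of its complex
eigenvalues (elements of the spectrum of the matrix viewed over `ℂ`). -/
noncomputable def specRad {ι : Type*} [Fintype ι] [DecidableEq ι]
    (M : Matrix ι ι ℝ) : ℝ :=
  sSup {r : ℝ | ∃ μ : ℂ, μ ∈ spectrum ℂ (M.map Complex.ofReal) ∧ r = ‖μ‖}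

/-- The induced `L¹` operator norm of a real matrix: the maximum absolute column sum. -/
noncomputable def colNorm {ι : Type*} [Fintype ι] (M : Matrix ι ι ℝ) : ℝ :=
  ⨆ q, ∑ p, |M p q|

/-- Local fecundity matrix: first row `(f 0, …, f (m-1))`, other rows zero. -/
def localF (m : ℕ) (f : Fin m → ℝ) : Matrix (Fin m) (Fin m) ℝ :=
  Matrix.of fun k' k => if (k' : ℕ) = 0 then f k else 0

/-- Local survival matrix: diagonal entries `sd k`, subdiagonal entries `ss k`,
all other entries zero. -/
def localS (m : ℕ) (sd ss : Fin m → ℝ) : Matrix (Fin m) (Fin m) ℝ :=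
  Matrix.of fun k' k =>
    if k' = k then sd k else if (k' : ℕ) = (k : ℕ) + 1 then ss k else 0

/-- Global (block-diagonal) fecundity matrix `F = ⊕ᵢ Fⁱ`, indexed by
(stage, patch) pairs. -/
def fecMat (m n : ℕ) (f : Fin m → Fin n → ℝ) :
    Matrix (Fin m × Fin n) (Fin m × Fin n) ℝ :=
  Matrix.of fun p q =>
    if p.2 = q.2 then localF m (fun k => f k q.2) p.1 q.1 else 0

/-- Global (block-diagonal) survival matrix `S = ⊕ᵢ Sⁱ`. -/
def survMat (m n : ℕ) (sd ss : Fin m → Fin n → ℝ) :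
    Matrix (Fin m × Fin n) (Fin m × Fin n) ℝ :=
  Matrix.of fun p q =>
    if p.2 = q.2 then localS m (fun k => sd k q.2) (fun k => ss k q.2) p.1 q.1 else 0

/-- Global dispersion matrix: the `(i,j)` patch block is `diag (d 0 i j, …, d (m-1) i j)`. -/
def dispMat (m n : ℕ) (d : Fin m → Fin n → Fin n → ℝ) :
    Matrix (Fin m × Fin n) (Fin m × Fin n) ℝ :=
  Matrix.of fun p q => if p.1 = q.1 then d q.1 p.2 q.2 else 0

/-- Next-generation matrix `N = D F (I - D S)⁻¹`. -/
noncomputable def nextGen (m n : ℕ) (f : Fin m → Fin n → ℝ)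
    (sd ss : Fin m → Fin n → ℝ) (d : Fin m → Fin n → Fin n → ℝ) :
    Matrix (Fin m × Fin n) (Fin m × Fin n) ℝ :=
  dispMat m n d * fecMat m n f * (1 - dispMat m n d * survMat m n sd ss)⁻¹

/-- Partial next-generation matrix `W = F (I - D S)⁻¹`. -/
noncomputable def partGen (m n : ℕ) (f : Fin m → Fin n → ℝ)
    (sd ss : Fin m → Fin n → ℝ) (d : Fin m → Fin n → Fin n → ℝ) :
    Matrix (Fin m × Fin n) (Fin m × Fin n) ℝ :=
  fecMat m n f * (1 - dispMat m n d * survMat m n sd ss)⁻¹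

/-- Newborn submatrix: keep only the rows and columns with stage index `0`
(the newborn indices). -/
def newbornSub {m n : ℕ} (hm : 0 < m)
    (B : Matrix (Fin m × Fin n) (Fin m × Fin n) ℝ) : Matrix (Fin n) (Fin n) ℝ :=
  Matrix.of fun i j => B (⟨0, hm⟩, i) (⟨0, hm⟩, j)

/-- The alternative net reproductive number `R̂₀ = max_{x ∈ 𝒳} ‖N x‖`, where `𝒳`
is the set of nonnegative `L¹`-unit vectors supported on the newborn indices. -/
noncomputable def altR0 (m n : ℕ)
    (N : Matrix (Fin m × Fin n) (Fin m × Fin n) ℝ) : ℝ :=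
  sSup {r : ℝ | ∃ x : Fin m × Fin n → ℝ, (∀ p, 0 ≤ x p) ∧ (∑ p, |x p|) = 1 ∧
    (∀ p : Fin m × Fin n, (p.1 : ℕ) ≠ 0 → x p = 0) ∧ r = ∑ p, |N.mulVec x p|}

section Aux
variable {ι : Type*} [Fintype ι] [DecidableEq ι]

attribute [local instance] Matrix.linftyOpNormedRing Matrix.linftyOpNormedAddCommGroup

private instance matCS : @CompleteSpace (Matrix ι ι ℝ)
    (@PseudoMetricSpace.toUniformSpace _ (Matrix.linftyOpNormedRing (α := ℝ)).toPseudoMetricSpace) :=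
  (inferInstance : CompleteSpace (ι → ι → ℝ))

private lemma pow_entry_nonneg {A : Matrix ι ι ℝ} (hA : ∀ p q, 0 ≤ A p q) :
    ∀ (k : ℕ) (p q : ι), 0 ≤ (A ^ k) p q := by
  intro k
  induction k with
  | zero => intro p q; simp [Matrix.one_apply]; split <;> norm_num
  | succ k ih =>
    intro p q
    rw [pow_succ, Matrix.mul_apply]
    exact Finset.sum_nonneg fun r _ => mul_nonneg (ih p r) (hA r q)

private theorem inv_entry_nonneg (A : Matrix ι ι ℝ) (hA : ∀ p q, 0 ≤ A p q)
    (hcol : ∀ q, ∑ p, A p q < 1) : ∀ p q, 0 ≤ (1 - A)⁻¹ p q := by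
  set B := Aᵀ with hB
  have hBpos : ∀ p q, 0 ≤ B p q := fun p q => hA q p
  have hBnorm : ‖B‖ < 1 := by
    rw [Matrix.linfty_opNorm_def]
    have key : (Finset.univ.sup fun i : ι => ∑ j, ‖B i j‖₊) < 1 := by
      rw [Finset.sup_lt_iff (show (⊥ : NNReal) < 1 by norm_num)]
      intro i _
      have hr : ((∑ j, ‖B i j‖₊ : NNReal) : ℝ) = ∑ j, A j i := by
        push_cast
        refine Finset.sum_congr rfl fun j _ => ?_
        rw [Real.norm_eq_abs, hB, Matrix.transpose_apply,
          abs_of_nonneg (hA j i)]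
      have h2 : ((∑ j, ‖B i j‖₊ : NNReal) : ℝ) < 1 := by rw [hr]; exact hcol i
      exact_mod_cast h2
    exact_mod_cast key
  have hsum : Summable (fun k : ℕ => B ^ k) := summable_geometric_of_norm_lt_one hBnorm
  set T : Matrix ι ι ℝ := ∑' k : ℕ, B ^ k with hT
  have hTmul : T * (1 - B) = 1 := (Units.oneSub B hBnorm).inv_val
  have hTpos : ∀ p q, 0 ≤ T p q := by
    intro p q
    let L : Matrix ι ι ℝ →ₗ[ℝ] ℝ :=
      { toFun := fun M => M p q, map_add' := fun _ _ => rfl, map_smul' := fun _ _ => rfl }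
    have hLb : ∀ M : Matrix ι ι ℝ, ‖L M‖ ≤ 1 * ‖M‖ := by
      intro M
      rw [one_mul]
      have h1 : ‖M p q‖₊ ≤ ‖M‖₊ := by
        rw [Matrix.linfty_opNNNorm_def]
        exact le_trans
          (Finset.single_le_sum (f := fun j => ‖M p j‖₊) (fun _ _ => zero_le)
            (Finset.mem_univ q))
          (Finset.le_sup (f := fun i => ∑ j, ‖M i j‖₊) (Finset.mem_univ p))
      exact_mod_cast h1
    have hs2 : HasSum (fun k : ℕ => (B ^ k) p q) (T p q) :=
      (L.mkContinuous 1 hLb).hasSum hsum.hasSum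
    exact hasSum_le (fun k => pow_entry_nonneg hBpos k p q) hasSum_zero hs2
  have hright : (1 - A) * Tᵀ = 1 := by
    have h1 : (1 - A) = (1 - B)ᵀ := by
      rw [Matrix.transpose_sub, Matrix.transpose_one, hB, Matrix.transpose_transpose]
    rw [h1, ← Matrix.transpose_mul, hTmul, Matrix.transpose_one]
  rw [Matrix.inv_eq_right_inv hright]
  intro p q
  exact hTpos q p

end Aux

theorem stmt1
    (m n : ℕ) (hm : 2 ≤ m) (hn : 1 ≤ n)
    (f : Fin m → Fin n → ℝ) (hf : ∀ k i, 0 ≤ f k i)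
    (sd ss : Fin m → Fin n → ℝ)
    (hsd : ∀ k i, 0 ≤ sd k i) (hss : ∀ k i, 0 ≤ ss k i)
    (hs1 : ∀ (k : Fin m) (i : Fin n),
      sd k i + (if (k : ℕ) + 1 < m then ss k i else 0) < 1)
    (d : Fin m → Fin n → Fin n → ℝ)
    (hd0 : ∀ k i j, 0 ≤ d k i j) (hd1 : ∀ k i j, d k i j ≤ 1)
    (hdsum : ∀ k j, ∑ i, d k i j = 1) :
    altR0 m n (nextGen m n f sd ss d) =
      colNorm (newbornSub (show 0 < m by omega) (partGen m n f sd ss d)) := by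
  haveI : Nonempty (Fin n) := ⟨⟨0, by omega⟩⟩
  set z : Fin m := ⟨0, by omega⟩ with hz
  set D := dispMat m n d with hD
  set S := survMat m n sd ss with hS
  set T := (1 - D * S)⁻¹ with hT
  set W := partGen m n f sd ss d with hWdef
  have hWFT : W = fecMat m n f * T := rfl
  set NX := nextGen m n f sd ss d with hNX
  have hNW : NX = D * W := by rw [hNX, hWFT]; exact mul_assoc _ _ _
  -- entrywise nonnegativity / column sums
  have hDpos : ∀ p q, 0 ≤ D p q := by
    intro p q
    simp only [hD, dispMat, Matrix.of_apply]
    split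
    · exact hd0 _ _ _
    · exact le_refl 0
  have hSpos : ∀ p q, 0 ≤ S p q := by
    intro p q
    simp only [hS, survMat, localS, Matrix.of_apply]
    split
    · split
      · exact hsd _ _
      · split
        · exact hss _ _
        · exact le_refl 0
    · exact le_refl 0
  have hDcol : ∀ r, ∑ p, D p r = 1 := by
    intro r
    have step : ∀ k : Fin m, (∑ i, D (k, i) r) = if k = r.1 then 1 else 0 := by
      intro k
      by_cases h : k = r.1
      · simp [hD, dispMat, h, hdsum]
      · simp [hD, dispMat, h]
    rw [Fintype.sum_prod_type]
    simp_rw [step]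
    simp
  have hScol : ∀ q, ∑ p, S p q < 1 := by
    rintro ⟨k, i⟩
    have inner : ∀ k' : Fin m, (∑ i' : Fin n, S (k', i') (k, i)) =
        (if k' = k then sd k i else 0) +
        (if (k' : ℕ) = (k : ℕ) + 1 then ss k i else 0) := by
      intro k'
      have h1 : (∑ i' : Fin n, S (k', i') (k, i)) =
          localS m (fun k => sd k i) (fun k => ss k i) k' k := by
        simp [hS, survMat]
      rw [h1]
      by_cases h2 : k' = k
      · subst h2
        have h3 : ¬((k' : ℕ) = (k' : ℕ) + 1) := by omega
        simp [localS, h3]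
      · simp [localS, h2]
    rw [Fintype.sum_prod_type]
    simp_rw [inner]
    rw [Finset.sum_add_distrib]
    have hsum1 : (∑ k' : Fin m, if k' = k then sd k i else 0) = sd k i := by
      simp
    have hsum2 : (∑ k' : Fin m, if (k' : ℕ) = (k : ℕ) + 1 then ss k i else 0) =
        if (k : ℕ) + 1 < m then ss k i else 0 := by
      by_cases h : (k : ℕ) + 1 < m
      · rw [if_pos h]
        have heq : ∀ k' : Fin m, ((k' : ℕ) = (k : ℕ) + 1) ↔ k' = ⟨(k : ℕ) + 1, h⟩ := by
          intro k'
          constructor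
          · intro hh; exact Fin.ext hh
          · intro hh; rw [hh]
        simp_rw [heq]
        simp
      · rw [if_neg h]
        apply Finset.sum_eq_zero
        intro k' _
        rw [if_neg]
        have := k'.isLt
        omega
    rw [hsum1, hsum2]
    exact hs1 k i
  have hDSpos : ∀ p q, 0 ≤ (D * S) p q := by
    intro p q
    rw [Matrix.mul_apply]
    exact Finset.sum_nonneg fun r _ => mul_nonneg (hDpos p r) (hSpos r q)
  have hDScol : ∀ q, ∑ p, (D * S) p q < 1 := by
    intro q
    have key : ∑ p, (D * S) p q = ∑ r, S r q := by
      simp_rw [Matrix.mul_apply]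
      rw [Finset.sum_comm]
      simp_rw [← Finset.sum_mul, hDcol, one_mul]
    rw [key]
    exact hScol q
  have hTpos : ∀ p q, 0 ≤ T p q := inv_entry_nonneg (D * S) hDSpos hDScol
  have hFpos : ∀ p q, 0 ≤ fecMat m n f p q := by
    intro p q
    simp only [fecMat, localF, Matrix.of_apply]
    split
    · split
      · exact hf _ _
      · exact le_refl 0
    · exact le_refl 0
  have hWpos : ∀ p q, 0 ≤ W p q := by
    intro p q
    rw [hWFT, Matrix.mul_apply]
    exact Finset.sum_nonneg fun r _ => mul_nonneg (hFpos p r) (hTpos r q)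
  have hWrow : ∀ p q : Fin m × Fin n, (p.1 : ℕ) ≠ 0 → W p q = 0 := by
    intro p q hp
    rw [hWFT, Matrix.mul_apply]
    apply Finset.sum_eq_zero
    intro r _
    have : fecMat m n f p r = 0 := by
      simp [fecMat, localF, hp]
    rw [this, zero_mul]
  have hNpos : ∀ p q, 0 ≤ NX p q := by
    intro p q
    rw [hNW, Matrix.mul_apply]
    exact Finset.sum_nonneg fun r _ => mul_nonneg (hDpos p r) (hWpos r q)
  have hNcol : ∀ q, ∑ p, NX p q = ∑ r, W r q := by
    intro q
    rw [hNW]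
    simp_rw [Matrix.mul_apply]
    rw [Finset.sum_comm]
    simp_rw [← Finset.sum_mul, hDcol, one_mul]
  set c : Fin n → ℝ := fun j => ∑ i, W (z, i) (z, j) with hc
  have hcW : ∀ j, ∑ r, W r (z, j) = c j := by
    intro j
    rw [Fintype.sum_prod_type]
    rw [Finset.sum_eq_single z]
    · intro b _ hb
      apply Finset.sum_eq_zero
      intro i _
      exact hWrow (b, i) (z, j) (fun h0 => hb (Fin.ext h0))
    · intro h
      exact absurd (Finset.mem_univ z) h
  have hNc : ∀ j, ∑ p, NX p (z, j) = c j := fun j => (hNcol _).trans (hcW j)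
  obtain ⟨j₀, hj₀⟩ := Finite.exists_max c
  -- altR0 = c j₀
  have hR : altR0 m n NX = c j₀ := by
    apply IsGreatest.csSup_eq
    constructor
    · -- membership: indicator of (z, j₀)
      refine ⟨fun p => if p = (z, j₀) then 1 else 0, ?_, ?_, ?_, ?_⟩
      · intro p; dsimp only; split <;> norm_num
      · simp [apply_ite abs]
      · intro p hp
        show (if p = (z, j₀) then (1:ℝ) else 0) = 0
        rw [if_neg]
        intro h
        apply hp
        rw [h]
      · have hmv : ∀ p, NX.mulVec (fun p => if p = (z, j₀) then (1:ℝ) else 0) p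
            = NX p (z, j₀) := by
          intro p
          simp [Matrix.mulVec, dotProduct, mul_ite]
        simp_rw [hmv]
        rw [← hNc j₀]
        exact (Finset.sum_congr rfl fun p _ => (abs_of_nonneg (hNpos p (z, j₀)))).symm
    · rintro r ⟨x, hx0, hx1, hxs, rfl⟩
      have hxsum : ∑ j, x (z, j) = 1 := by
        rw [← hx1, Fintype.sum_prod_type]
        rw [Finset.sum_eq_single z]
        · exact Finset.sum_congr rfl fun j _ => (abs_of_nonneg (hx0 (z, j))).symm
        · intro b _ hb
          apply Finset.sum_eq_zero
          intro j _
          rw [hxs (b, j) (fun h0 => hb (Fin.ext h0)), abs_zero]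
        · intro h; exact absurd (Finset.mem_univ z) h
      calc ∑ p, |NX.mulVec x p| = ∑ p, ∑ q, NX p q * x q := by
            refine Finset.sum_congr rfl fun p _ => ?_
            rw [abs_of_nonneg]
            · simp [Matrix.mulVec, dotProduct]
            · exact Finset.sum_nonneg fun q _ => mul_nonneg (hNpos p q) (hx0 q)
        _ = ∑ q, (∑ p, NX p q) * x q := by
            rw [Finset.sum_comm]; simp_rw [Finset.sum_mul]
        _ = ∑ j, (∑ p, NX p (z, j)) * x (z, j) := by
            rw [Fintype.sum_prod_type]
            rw [Finset.sum_eq_single z]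
            · intro b _ hb
              apply Finset.sum_eq_zero
              intro j _
              rw [hxs (b, j) (fun h0 => hb (Fin.ext h0)), mul_zero]
            · intro h; exact absurd (Finset.mem_univ z) h
        _ = ∑ j, c j * x (z, j) := by simp_rw [hNc]
        _ ≤ ∑ j, c j₀ * x (z, j) :=
            Finset.sum_le_sum fun j _ =>
              mul_le_mul_of_nonneg_right (hj₀ j) (hx0 (z, j))
        _ = c j₀ := by rw [← Finset.mul_sum, hxsum, mul_one]
  have hC : colNorm (newbornSub (show 0 < m by omega) W) = c j₀ := by
    have hcol : colNorm (newbornSub (show 0 < m by omega) W)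
        = ⨆ j, ∑ i, |W (z, i) (z, j)| := rfl
    rw [hcol]
    have habs : (fun j => ∑ i, |W (z, i) (z, j)|) = c :=
      funext fun j => Finset.sum_congr rfl fun i _ => abs_of_nonneg (hWpos (z, i) (z, j))
    rw [habs]
    exact le_antisymm (ciSup_le fun j => hj₀ j)
      (le_ciSup (Set.Finite.bddAbove (Set.finite_range c)) j₀)
  rw [hR, hC]
end

section
/- The net reproductive number satisfies the bound R₀ ≤ ‖F‖ / (1 − ‖S‖), where ‖F‖ = max_{k,i} f_k^i and ‖S‖ = max_{k,i} (s^i_{k,k} + s^i_{k+1,k}) < 1. In particular, the net reproductive number cannot be made arbitrarily large by varying the dispersion rates. -/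
open Matrix BigOperators

open Matrix BigOperators

section auxSect

attribute [local instance] Matrix.linftyOpNormedRing Matrix.linftyOpNormedAlgebra

variable {ι : Type*} [Fintype ι] [DecidableEq ι]

lemma aux_norm_le [Nonempty ι] (M : Matrix ι ι ℝ) {c : ℝ}
    (h : ∀ i, ∑ j, |M i j| ≤ c) : ‖M‖ ≤ c := by
  have hc : 0 ≤ c :=
    le_trans (Finset.sum_nonneg fun j _ => abs_nonneg _) (h (Classical.arbitrary ι))
  rw [Matrix.linfty_opNorm_def]
  have : (Finset.univ.sup fun i : ι => ∑ j, ‖M i j‖₊) ≤ ⟨c, hc⟩ := by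
    refine Finset.sup_le fun i _ => ?_
    have := h i
    apply NNReal.coe_le_coe.mp
    push_cast
    exact le_trans (le_of_eq (by simp [Real.norm_eq_abs])) this
  exact_mod_cast this

lemma aux_norm_le_c [Nonempty ι] (M : Matrix ι ι ℂ) {c : ℝ}
    (h : ∀ i, ∑ j, ‖M i j‖ ≤ c) : ‖M‖ ≤ c := by
  have hc : 0 ≤ c :=
    le_trans (Finset.sum_nonneg fun j _ => norm_nonneg _) (h (Classical.arbitrary ι))
  rw [Matrix.linfty_opNorm_def]
  have : (Finset.univ.sup fun i : ι => ∑ j, ‖M i j‖₊) ≤ ⟨c, hc⟩ := by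
    refine Finset.sup_le fun i _ => ?_
    have := h i
    apply NNReal.coe_le_coe.mp
    push_cast
    exact this
  exact_mod_cast this

lemma aux_row_le (M : Matrix ι ι ℝ) (i : ι) : ∑ j, |M i j| ≤ ‖M‖ := by
  rw [Matrix.linfty_opNorm_def]
  have : (∑ j, ‖M i j‖₊) ≤ Finset.univ.sup fun i : ι => ∑ j, ‖M i j‖₊ :=
    Finset.le_sup (f := fun i : ι => ∑ j, ‖M i j‖₊) (Finset.mem_univ i)
  calc ∑ j, |M i j| = ((∑ j, ‖M i j‖₊ : NNReal) : ℝ) := by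
        push_cast; simp [Real.norm_eq_abs]
    _ ≤ _ := by exact_mod_cast this

lemma aux_spec_transpose (M : Matrix ι ι ℂ) : spectrum ℂ Mᵀ = spectrum ℂ M := by
  ext μ
  simp only [spectrum.mem_iff, Matrix.isUnit_iff_isUnit_det, not_iff_not]
  rw [Algebra.algebraMap_eq_smul_one, ← Matrix.det_transpose (μ • 1 - Mᵀ)]
  simp [Matrix.transpose_sub, Matrix.transpose_smul]

lemma aux_inv_norm [Nonempty ι] (A : Matrix ι ι ℝ) (h : ‖A‖ < 1) :
    ‖(1 - A)⁻¹‖ ≤ (1 - ‖A‖)⁻¹ := by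
  have h1 : (1 - A)⁻¹ = ∑' k : ℕ, A ^ k := by
    rw [Matrix.nonsing_inv_eq_ringInverse, ← geom_series_eq_inverse A h]
    rfl
  calc ‖(1 - A)⁻¹‖ = ‖∑' k : ℕ, A ^ k‖ := by rw [h1]
    _ ≤ ‖(1 : Matrix ι ι ℝ)‖ - 1 + (1 - ‖A‖)⁻¹ := tsum_geometric_le_of_norm_lt_one A h
    _ = (1 - ‖A‖)⁻¹ := by rw [norm_one]; ring


theorem stmt9
    (m n : ℕ) (hm : 2 ≤ m) (hn : 1 ≤ n)
    (f : Fin m → Fin n → ℝ) (hf : ∀ k i, 0 ≤ f k i)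
    (sd ss : Fin m → Fin n → ℝ)
    (hsd : ∀ k i, 0 ≤ sd k i) (hss : ∀ k i, 0 ≤ ss k i)
    (hs1 : ∀ (k : Fin m) (i : Fin n),
      sd k i + (if (k : ℕ) + 1 < m then ss k i else 0) < 1)
    (d : Fin m → Fin n → Fin n → ℝ)
    (hd0 : ∀ k i j, 0 ≤ d k i j) (hd1 : ∀ k i j, d k i j ≤ 1)
    (hdsum : ∀ k j, ∑ i, d k i j = 1) :
    (⨆ p : Fin m × Fin n,
        (sd p.1 p.2 + if (p.1 : ℕ) + 1 < m then ss p.1 p.2 else 0)) < 1 ∧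
      specRad (nextGen m n f sd ss d) ≤
        (⨆ p : Fin m × Fin n, f p.1 p.2) /
          (1 - ⨆ p : Fin m × Fin n,
            (sd p.1 p.2 + if (p.1 : ℕ) + 1 < m then ss p.1 p.2 else 0)) := by
  haveI : NeZero m := ⟨by omega⟩
  haveI : NeZero n := ⟨by omega⟩
  set g : Fin m × Fin n → ℝ :=
    fun p => sd p.1 p.2 + if (p.1 : ℕ) + 1 < m then ss p.1 p.2 else 0 with hg
  have hg0 : ∀ p, 0 ≤ g p := by
    intro p; refine add_nonneg (hsd _ _) ?_; split_ifs
    · exact hss _ _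
    · exact le_refl 0
  set σ := ⨆ p, g p with hσdef
  set φ := (⨆ p : Fin m × Fin n, f p.1 p.2 : ℝ) with hφdef
  have hσlt : σ < 1 := by
    obtain ⟨p, hp⟩ := exists_eq_ciSup_of_finite (f := g)
    rw [hσdef, ← hp]; exact hs1 p.1 p.2
  have hgb : ∀ p, g p ≤ σ := fun p => le_ciSup (Set.finite_range g).bddAbove p
  have hfb : ∀ k i, f k i ≤ φ := fun k i =>
    le_ciSup (Set.finite_range (fun p : Fin m × Fin n => f p.1 p.2)).bddAbove (k, i)
  have hσ0 : 0 ≤ σ := le_trans (hg0 default) (hgb default)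
  have hφ0 : 0 ≤ φ := le_trans (hf 0 0) (hfb 0 0)
  refine ⟨hσlt, ?_⟩
  set D' := dispMat m n d with hD'
  set F' := fecMat m n f with hF'
  set S' := survMat m n sd ss with hS'
  -- row-sum bounds of transposes
  have hDt : ‖D'ᵀ‖ ≤ 1 := by
    refine aux_norm_le _ ?_
    rintro ⟨k, i⟩
    have : ∀ q : Fin m × Fin n, |D'ᵀ (k, i) q| = if q.1 = k then d k q.2 i else 0 := by
      rintro ⟨k', j⟩
      simp only [transpose_apply, hD', dispMat, of_apply]
      split_ifs with h1
      · subst h1; exact abs_of_nonneg (hd0 _ _ _)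
      · exact abs_zero
    rw [Finset.sum_congr rfl fun q _ => this q]
    rw [Fintype.sum_prod_type]
    have h2 : ∀ k' : Fin m, (∑ j, if k' = k then d k j i else 0)
        = if k' = k then (1 : ℝ) else 0 := by
      intro k'
      split_ifs with h
      · exact hdsum k i
      · simp
    rw [Finset.sum_congr rfl fun k' _ => h2 k', Finset.sum_ite_eq' Finset.univ k fun _ => (1:ℝ)]
    simp
  have hFt : ‖F'ᵀ‖ ≤ φ := by
    refine aux_norm_le _ ?_
    rintro ⟨k, i⟩
    have : ∀ q : Fin m × Fin n, |F'ᵀ (k, i) q|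
        = if q = ((0 : Fin m), i) then f k i else 0 := by
      rintro ⟨k', j⟩
      simp only [transpose_apply, hF', fecMat, localF, of_apply, Prod.mk.injEq]
      rcases eq_or_ne j i with rfl | hj
      · rcases eq_or_ne (k' : ℕ) 0 with h0 | h0
        · have : k' = 0 := Fin.ext h0
          subst this
          simp [abs_of_nonneg (hf k j)]
        · have : k' ≠ 0 := fun hh => h0 (by simp [hh])
          simp [h0, this]
      · simp [hj]
    rw [Finset.sum_congr rfl fun q _ => this q, Finset.sum_ite_eq' Finset.univ _ fun _ => f k i]
    simpa using hfb k i
  have hSt : ‖S'ᵀ‖ ≤ σ := by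
    refine aux_norm_le _ ?_
    rintro ⟨k, i⟩
    have key : ∀ q : Fin m × Fin n, |S'ᵀ (k, i) q|
        = (if q = (k, i) then sd k i else 0)
          + (if (q.1 : ℕ) = (k : ℕ) + 1 ∧ q.2 = i then ss k i else 0) := by
      rintro ⟨k', j⟩
      simp only [transpose_apply, hS', survMat, localS, of_apply, Prod.mk.injEq]
      rcases eq_or_ne j i with rfl | hj
      · rcases eq_or_ne k' k with rfl | hk
        · have : ¬((k' : ℕ) = (k' : ℕ) + 1) := by omega
          simp [abs_of_nonneg (hsd _ _), this]
        · rcases eq_or_ne ((k' : ℕ)) ((k : ℕ) + 1) with h1 | h1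
          · simp [hk, h1, abs_of_nonneg (hss _ _)]
          · simp [hk, h1]
      · simp [hj]
    rw [Finset.sum_congr rfl fun q _ => key q, Finset.sum_add_distrib,
      Finset.sum_ite_eq' Finset.univ _ fun _ => sd k i]
    have h2 : (∑ q : Fin m × Fin n,
        if (q.1 : ℕ) = (k : ℕ) + 1 ∧ q.2 = i then ss k i else 0)
        = if (k : ℕ) + 1 < m then ss k i else 0 := by
      by_cases hlt : (k : ℕ) + 1 < m
      · have : ∀ q : Fin m × Fin n,
            ((q.1 : ℕ) = (k : ℕ) + 1 ∧ q.2 = i) ↔ q = (⟨(k : ℕ) + 1, hlt⟩, i) := by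
          rintro ⟨k', j⟩
          simp [Prod.ext_iff, Fin.ext_iff]
        simp only [this]
        rw [Finset.sum_ite_eq' Finset.univ _ fun _ => ss k i]
        simp [hlt]
      · have : ∀ q : Fin m × Fin n, ¬((q.1 : ℕ) = (k : ℕ) + 1 ∧ q.2 = i) := by
          rintro ⟨k', j⟩ ⟨h1, h2⟩
          exact hlt (h1 ▸ k'.isLt)
        simp [this, hlt]
    rw [h2]
    simpa using hgb (k, i)
  have hA : ‖S'ᵀ * D'ᵀ‖ ≤ σ := by
    calc ‖S'ᵀ * D'ᵀ‖ ≤ ‖S'ᵀ‖ * ‖D'ᵀ‖ := Matrix.linfty_opNorm_mul _ _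
      _ ≤ σ * 1 := mul_le_mul hSt hDt (norm_nonneg _) hσ0
      _ = σ := mul_one σ
  have hA1 : ‖S'ᵀ * D'ᵀ‖ < 1 := lt_of_le_of_lt hA hσlt
  have hNt : ‖(nextGen m n f sd ss d)ᵀ‖ ≤ (1 - σ)⁻¹ * φ := by
    have hrw : (nextGen m n f sd ss d)ᵀ = (1 - S'ᵀ * D'ᵀ)⁻¹ * (F'ᵀ * D'ᵀ) := by
      show (D' * F' * (1 - D' * S')⁻¹)ᵀ = _
      rw [Matrix.transpose_mul, Matrix.transpose_mul, Matrix.transpose_nonsing_inv,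
        Matrix.transpose_sub, Matrix.transpose_one, Matrix.transpose_mul]
    rw [hrw]
    have hinv : ‖(1 - S'ᵀ * D'ᵀ)⁻¹‖ ≤ (1 - σ)⁻¹ := by
      refine le_trans (aux_inv_norm _ hA1) ?_
      exact inv_anti₀ (by linarith) (by linarith)
    calc ‖(1 - S'ᵀ * D'ᵀ)⁻¹ * (F'ᵀ * D'ᵀ)‖
        ≤ ‖(1 - S'ᵀ * D'ᵀ)⁻¹‖ * ‖F'ᵀ * D'ᵀ‖ := Matrix.linfty_opNorm_mul _ _
      _ ≤ (1 - σ)⁻¹ * (φ * 1) := by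
          refine mul_le_mul hinv ?_ (norm_nonneg _) (inv_nonneg.mpr (by linarith))
          calc ‖F'ᵀ * D'ᵀ‖ ≤ ‖F'ᵀ‖ * ‖D'ᵀ‖ := Matrix.linfty_opNorm_mul _ _
            _ ≤ φ * 1 := mul_le_mul hFt hDt (norm_nonneg _) hφ0
      _ = (1 - σ)⁻¹ * φ := by rw [mul_one]
  -- spectral radius bound
  rw [specRad]
  refine Real.sSup_le ?_ (div_nonneg hφ0 (by linarith))
  rintro r ⟨μ, hμ, rfl⟩
  set N := nextGen m n f sd ss d with hN
  have hμt : μ ∈ spectrum ℂ ((N.map (Complex.ofReal : ℝ → ℂ))ᵀ) := by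
    rw [aux_spec_transpose]; exact hμ
  have hcle : ‖(N.map (Complex.ofReal : ℝ → ℂ))ᵀ‖ ≤ ‖Nᵀ‖ := by
    rw [← Matrix.transpose_map]
    refine aux_norm_le_c _ ?_
    intro i
    refine le_trans (le_of_eq ?_) (aux_row_le Nᵀ i)
    refine Finset.sum_congr rfl fun j _ => ?_
    simp [Matrix.map_apply, Complex.norm_real, Real.norm_eq_abs]
  calc ‖μ‖ = ‖μ‖ := rfl
    _ ≤ ‖(N.map (Complex.ofReal : ℝ → ℂ))ᵀ‖ := spectrum.norm_le_norm_of_mem hμt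
    _ ≤ ‖Nᵀ‖ := hcle
    _ ≤ (1 - σ)⁻¹ * φ := hNt
    _ = φ / (1 - σ) := by rw [div_eq_mul_inv, mul_comm]
end auxSect
end
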